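/- Let (X̄, d) be a complete separable metric space and let 𝒫₂(X̄) be the Borel probability measures with finite second moment, with W₂-convergence defined as weak convergence together with convergence of second moments. Let S : 𝒫₂(X̄) × X̄ → ℝ be a strictly proper scoring rule, and assume the expected-score functional (P, Q) ↦ E_{y∼Q}[S(P, y)] is sequentially jointly continuous with respect to W₂-convergence in both arguments. Let μ̄ ∈ 𝒫₂(X̄). For each m ∈ ℕ let Q_m and P̃_m be Markov kernels from X̄ to X̄ with values in 𝒫₂(X̄), and let P̃_∞ be a Markov kernel with values in 𝒫₂(X̄). Assume: for μ̄-almost every x, Q_m(x) → μ̄ in W₂ and P̃_m(x) → P̃_∞(x) in W₂ as m → ∞; and the functions f_m(x) := E_{y∼Q_m(x)}[S(P̃_m(x), y)] are uniformly integrable with respect to μ̄. Then lim_{m→∞} ∫ f_m dμ̄ = ∫ d_S(P̃_∞(x), μ̄) dμ̄(x) + E_{y∼μ̄}[S(μ̄, y)], where d_S(P, Q) := E_{y∼Q}[S(P, y)] − E_{y∼Q}[S(Q, y)] is the divergence induced by S. In particular, the parameter-dependent part of the asymptotic objective is exactly the expected divergence between the model's long-lead predictive law and the invariant measure. (Proposition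 2: asymptotic consistency of strictly proper scoring rules.) -/

import Mathlib

open MeasureTheory ProbabilityTheory Filter Topology
open scoped BoundedContinuousFunction NNReal ENNReal

/-- `ν ∈ 𝒫₂(X)`: a Borel probability measure with finite second moment about the
base point `x₀`. -/
def MemP2 {X : Type*} [MetricSpace X] [MeasurableSpace X]
    (x₀ : X) (ν : Measure X) : Prop :=
  IsProbabilityMeasure ν ∧ Integrable (fun x => dist x x₀ ^ 2) ν

/-- Weak convergence of measures: convergence of integrals of all bounded
continuous functions. -/
def WeakTendsto {X : Type*} [MetricSpace X] [MeasurableSpace X]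
    (νs : ℕ → Measure X) (ν : Measure X) : Prop :=
  ∀ f : X →ᵇ ℝ, Tendsto (fun m => ∫ x, f x ∂(νs m)) atTop (𝓝 (∫ x, f x ∂ν))

/-- Convergence in the 2-Wasserstein sense: weak convergence together with
convergence of second moments about the base point `x₀`. -/
def W2Tendsto {X : Type*} [MetricSpace X] [MeasurableSpace X]
    (x₀ : X) (νs : ℕ → Measure X) (ν : Measure X) : Prop :=
  WeakTendsto νs ν ∧
    Tendsto (fun m => ∫ x, dist x x₀ ^ 2 ∂(νs m)) atTop (𝓝 (∫ x, dist x x₀ ^ 2 ∂ν))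

/-- Proposition 2: asymptotic consistency of strictly proper
scoring rules. If the true conditional laws `Q_m(x)` converge in `W₂` to the
invariant measure `μ̄` and the model predictive laws `P̃_m(x)` converge in `W₂` to
`P̃_∞(x)` for `μ̄`-a.e. `x`, the expected-score functional is jointly sequentially
`W₂`-continuous, and the conditional expected scores `f_m` are uniformly
integrable, then
`lim_m ∫ f_m dμ̄ = ∫ d_S(P̃_∞(x), μ̄) dμ̄(x) + E_{y∼μ̄}[S(μ̄, y)]`,
where `d_S(P, Q) = E_{y∼Q}[S(P, y)] − E_{y∼Q}[S(Q, y)]`. -/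
theorem strictly_proper_score_asymptotic_consistency
    {X : Type*} [MetricSpace X] [CompleteSpace X] [TopologicalSpace.SeparableSpace X]
    [MeasurableSpace X] [BorelSpace X]
    (x₀ : X) (S : Measure X → X → ℝ)
    (hSint : ∀ P Q : Measure X, MemP2 x₀ P → MemP2 x₀ Q → Integrable (fun y => S P y) Q)
    (hproper : ∀ P Q : Measure X, MemP2 x₀ P → MemP2 x₀ Q →
      (∫ y, S Q y ∂Q) ≤ ∫ y, S P y ∂Q ∧
      ((∫ y, S P y ∂Q = ∫ y, S Q y ∂Q) ↔ P = Q))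
    (hcont : ∀ (Ps Qs : ℕ → Measure X) (P Q : Measure X),
      (∀ m, MemP2 x₀ (Ps m)) → (∀ m, MemP2 x₀ (Qs m)) →
      MemP2 x₀ P → MemP2 x₀ Q →
      W2Tendsto x₀ Ps P → W2Tendsto x₀ Qs Q →
      Tendsto (fun m => ∫ y, S (Ps m) y ∂(Qs m)) atTop (𝓝 (∫ y, S P y ∂Q)))
    (μbar : Measure X) (hμbar : MemP2 x₀ μbar)
    (Q Pt : ℕ → Kernel X X)
    (hQmarkov : ∀ m, IsMarkovKernel (Q m)) (hPtmarkov : ∀ m, IsMarkovKernel (Pt m))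
    (Ptinf : Kernel X X) (hPtinfmarkov : IsMarkovKernel Ptinf)
    (hQmom : ∀ m x, MemP2 x₀ (Q m x)) (hPtmom : ∀ m x, MemP2 x₀ (Pt m x))
    (hPtinfmom : ∀ x, MemP2 x₀ (Ptinf x))
    (hQconv : ∀ᵐ x ∂μbar, W2Tendsto x₀ (fun m => Q m x) μbar)
    (hPtconv : ∀ᵐ x ∂μbar, W2Tendsto x₀ (fun m => Pt m x) (Ptinf x))
    (f : ℕ → X → ℝ)
    (hf : ∀ m x, f m x = ∫ y, S (Pt m x) y ∂(Q m x))
    (hfint : ∀ m, Integrable (f m) μbar)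
    (hUI : ∀ ε > 0, ∃ K > (0 : ℝ), ∀ m, ∫ x in {x | K ≤ |f m x|}, |f m x| ∂μbar ≤ ε) :
    Tendsto (fun m => ∫ x, f m x ∂μbar) atTop
      (𝓝 ((∫ x, ((∫ y, S (Ptinf x) y ∂μbar) - ∫ y, S μbar y ∂μbar) ∂μbar)
            + ∫ y, S μbar y ∂μbar)) := by
  haveI : IsProbabilityMeasure μbar := hμbar.1
  haveI : IsFiniteMeasure μbar := inferInstance
  -- the limit function
  set g : X → ℝ := fun x => ∫ y, S (Ptinf x) y ∂μbar with hg
  set c : ℝ := ∫ y, S μbar y ∂μbar with hc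
  -- a.e. pointwise convergence of f m to g
  have htend : ∀ᵐ x ∂μbar, Tendsto (fun m => f m x) atTop (𝓝 (g x)) := by
    filter_upwards [hQconv, hPtconv] with x hQx hPx
    have := hcont (fun m => Pt m x) (fun m => Q m x) (Ptinf x) μbar
      (fun m => hPtmom m x) (fun m => hQmom m x) (hPtinfmom x) hμbar hPx hQx
    simpa [hf] using this
  -- measurable representatives
  set F : ℕ → X → ℝ := fun m => ((hfint m).1.mk (f m)) with hF
  have hFmeas : ∀ m, StronglyMeasurable (F m) := fun m => (hfint m).1.stronglyMeasurable_mk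
  have hFe : ∀ m, f m =ᵐ[μbar] F m := fun m => (hfint m).1.ae_eq_mk
  have hFint : ∀ m, Integrable (F m) μbar := fun m => (hfint m).congr (hFe m)
  have hFtend : ∀ᵐ x ∂μbar, Tendsto (fun m => F m x) atTop (𝓝 (g x)) := by
    have hall : ∀ᵐ x ∂μbar, ∀ m, f m x = F m x := ae_all_iff.2 hFe
    filter_upwards [htend, hall] with x hx heq
    simpa [funext fun m => (heq m).symm] using hx
  -- uniform integrability of F in the Mathlib sense
  have hUIF : UniformIntegrable F 1 μbar := by
    refine uniformIntegrable_of' le_rfl ENNReal.one_ne_top hFmeas ?_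
    intro ε hε
    obtain ⟨K, hK, hKe⟩ := hUI ε hε
    refine ⟨K.toNNReal, fun i => ?_⟩
    have hset : {x | K.toNNReal ≤ ‖F i x‖₊} = {x | K ≤ |F i x|} := by
      ext x
      simp [Real.toNNReal_le_iff_le_coe, coe_nnnorm, Real.norm_eq_abs]
    have hsm : MeasurableSet {x | K.toNNReal ≤ ‖F i x‖₊} := by
      rw [hset]
      exact measurableSet_le measurable_const (hFmeas i).measurable.abs
    have hseq : {x | K.toNNReal ≤ ‖F i x‖₊} =ᵐ[μbar] {x | K ≤ |f i x|} := by
      filter_upwards [hFe i] with x hx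
      simp only [hset, eq_iff_iff]
      show K ≤ |F i x| ↔ K ≤ |f i x|
      rw [hx]
    have hbd : ∫ x in {x | K.toNNReal ≤ ‖F i x‖₊}, |F i x| ∂μbar ≤ ε := by
      calc ∫ x in {x | K.toNNReal ≤ ‖F i x‖₊}, |F i x| ∂μbar
          = ∫ x in {x | K.toNNReal ≤ ‖F i x‖₊}, |f i x| ∂μbar :=
            integral_congr_ae (ae_restrict_of_ae ((hFe i).mono fun x hx => by simp [hx]))
        _ = ∫ x in {x | K ≤ |f i x|}, |f i x| ∂μbar := by
            rw [Measure.restrict_congr_set hseq]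
        _ ≤ ε := hKe i
    have hint : Integrable (F i) (μbar.restrict {x | K.toNNReal ≤ ‖F i x‖₊}) :=
      (hFint i).restrict
    calc eLpNorm ({x | K.toNNReal ≤ ‖F i x‖₊}.indicator (F i)) 1 μbar
        = eLpNorm (F i) 1 (μbar.restrict {x | K.toNNReal ≤ ‖F i x‖₊}) :=
          eLpNorm_indicator_eq_eLpNorm_restrict hsm
      _ = ∫⁻ x, ‖F i x‖₊ ∂(μbar.restrict {x | K.toNNReal ≤ ‖F i x‖₊}) :=
          eLpNorm_one_eq_lintegral_enorm
      _ = ENNReal.ofReal (∫ x, ‖F i x‖ ∂(μbar.restrict {x | K.toNNReal ≤ ‖F i x‖₊})) :=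
          (ofReal_integral_norm_eq_lintegral_enorm hint).symm
      _ ≤ ENNReal.ofReal ε := by
          refine ENNReal.ofReal_le_ofReal ?_
          simpa [Real.norm_eq_abs] using hbd
  obtain ⟨hFam, hFunif, C, hC⟩ := hUIF
  -- g is in L¹
  have hgmeas : AEStronglyMeasurable g μbar :=
    aestronglyMeasurable_of_tendsto_ae atTop hFam hFtend
  have hgmem : MemLp g 1 μbar := by
    refine ⟨hgmeas, ?_⟩
    have hle : eLpNorm g 1 μbar ≤ atTop.liminf fun n => eLpNorm (F n) 1 μbar :=
      Lp.eLpNorm_lim_le_liminf_eLpNorm hFam g hFtend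
    refine lt_of_le_of_lt hle (lt_of_le_of_lt ?_ (ENNReal.coe_lt_top (r := C)))
    exact liminf_le_of_le (by isBoundedDefault) (fun b hb => by
      obtain ⟨n, hn⟩ := hb.exists; exact hn.trans (hC n))
  have hgint : Integrable g μbar := memLp_one_iff_integrable.1 hgmem
  -- Vitali: L¹ convergence
  have hL1 : Tendsto (fun n => eLpNorm (F n - g) 1 μbar) atTop (𝓝 0) :=
    tendsto_Lp_finite_of_tendsto_ae le_rfl ENNReal.one_ne_top hFam hgmem hFunif hFtend
  have hIconv : Tendsto (fun m => ∫ x, F m x ∂μbar) atTop (𝓝 (∫ x, g x ∂μbar)) := by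
    refine tendsto_integral_of_L1 g hgint.1 (Eventually.of_forall hFint) ?_
    have heq : ∀ n, (∫⁻ x, ‖F n x - g x‖ₑ ∂μbar) = eLpNorm (F n - g) 1 μbar := fun n => by
      rw [eLpNorm_one_eq_lintegral_enorm]; rfl
    simpa [heq] using hL1
  have hIeq : ∀ m, ∫ x, f m x ∂μbar = ∫ x, F m x ∂μbar := fun m =>
    integral_congr_ae (hFe m)
  have hvalue : (∫ x, ((∫ y, S (Ptinf x) y ∂μbar) - c) ∂μbar) + c = ∫ x, g x ∂μbar := by
    rw [integral_sub hgint (integrable_const c), integral_const]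
    simp
  rw [hvalue]
  simp only [hIeq]
  exact hIconv
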